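/- Let {f_i}_{i∈I} be a Parseval frame sequence in a Hilbert space H, i.e., {f_i}_{i∈I} is a Parseval frame for the closed subspace K = closure(span{f_i : i∈I}) of H. Then for every subset J ⊆ I and every f ∈ H: ∑_{i∈J} |⟨f, f_i⟩|² − ‖∑_{i∈J} ⟨f, f_i⟩ f_i‖² = ∑_{i∈J^c} |⟨f, f_i⟩|² − ‖∑_{i∈J^c} ⟨f, f_i⟩ f_i‖², where J^c = I \ J. -/

import Mathlib

open scoped InnerProductSpace

private lemma aux_sq (u v : ℂ) :
    ‖u + v‖ ^ 2 - ‖u - v‖ ^ 2 = 4 * RCLike.re ((starRingEnd ℂ) u * v) := by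
  simp only [Complex.sq_norm, Complex.normSq_apply, Complex.add_re,
    Complex.add_im, Complex.sub_re, Complex.sub_im, RCLike.re_to_complex, Complex.mul_re,
    Complex.conj_re, Complex.conj_im]
  ring

private lemma aux_sq2 (c : ℂ) : RCLike.re (c * (starRingEnd ℂ) c) = ‖c‖ ^ 2 := by
  rw [Complex.mul_conj]
  simp only [Complex.normSq_eq_norm_sq, RCLike.re_to_complex]
  norm_cast

private lemma lemA {H : Type*} [NormedAddCommGroup H] [InnerProductSpace ℂ H]
    {ι' : Type*} {K : Submodule ℂ H} (g : ι' → H) (hgK : ∀ i, g i ∈ K)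
    (hB : ∀ v ∈ K, ∀ F : Finset ι', ∑ i ∈ F, ‖⟪g i, v⟫_ℂ‖ ^ 2 ≤ ‖v‖ ^ 2)
    (c : ι' → ℂ) (F : Finset ι') :
    ‖∑ i ∈ F, c i • g i‖ ^ 2 ≤ ∑ i ∈ F, ‖c i‖ ^ 2 := by
  set v := ∑ i ∈ F, c i • g i with hv
  have hvK : v ∈ K := Submodule.sum_mem _ fun i _ => K.smul_mem _ (hgK i)
  have h2 : ∑ i ∈ F, ‖⟪g i, v⟫_ℂ‖ ^ 2 ≤ ‖v‖ ^ 2 := hB v hvK F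
  have h3 : ‖v‖ ^ 2 ≤ ∑ i ∈ F, ‖c i‖ * ‖⟪g i, v⟫_ℂ‖ := by
    have e1 : (‖v‖ : ℝ) ^ 2 = RCLike.re (⟪v, v⟫_ℂ) := (inner_self_eq_norm_sq v).symm
    rw [e1, hv, sum_inner]
    rw [map_sum]
    apply Finset.sum_le_sum
    intro i _
    calc RCLike.re ⟪c i • g i, v⟫_ℂ ≤ ‖⟪c i • g i, v⟫_ℂ‖ := RCLike.re_le_norm _
      _ = ‖c i‖ * ‖⟪g i, v⟫_ℂ‖ := by
          rw [inner_smul_left]; rw [norm_mul, RCLike.norm_conj]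
  have h4 : (∑ i ∈ F, ‖c i‖ * ‖⟪g i, v⟫_ℂ‖) ^ 2 ≤
      (∑ i ∈ F, ‖c i‖ ^ 2) * ∑ i ∈ F, ‖⟪g i, v⟫_ℂ‖ ^ 2 :=
    Finset.sum_mul_sq_le_sq_mul_sq F _ _
  have hS : 0 ≤ ∑ i ∈ F, ‖c i‖ ^ 2 := Finset.sum_nonneg fun i _ => by positivity
  rcases eq_or_lt_of_le (sq_nonneg ‖v‖) with h | h
  · linarith [h.symm]
  · nlinarith [h3, h4, h2, sq_nonneg ‖v‖]

private lemma lemB {H : Type*} [NormedAddCommGroup H] [InnerProductSpace ℂ H] [CompleteSpace H]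
    {ι' : Type*} {K : Submodule ℂ H} (g : ι' → H) (hgK : ∀ i, g i ∈ K)
    (hB : ∀ v ∈ K, ∀ F : Finset ι', ∑ i ∈ F, ‖⟪g i, v⟫_ℂ‖ ^ 2 ≤ ‖v‖ ^ 2)
    (c : ι' → ℂ) (hc : Summable fun i => ‖c i‖ ^ 2) :
    Summable fun i => c i • g i := by
  rw [summable_iff_vanishing]
  intro e he
  obtain ⟨ε, hε, hball⟩ := Metric.mem_nhds_iff.mp he
  obtain ⟨s, hs⟩ := (summable_iff_vanishing.mp hc) (Metric.ball 0 (ε ^ 2))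
    (Metric.ball_mem_nhds 0 (by positivity))
  refine ⟨s, fun t ht => hball ?_⟩
  have h1 := hs t ht
  rw [Metric.mem_ball, Real.dist_eq, sub_zero] at h1
  have h1' : ∑ i ∈ t, ‖c i‖ ^ 2 < ε ^ 2 := (le_abs_self _).trans_lt h1
  have h2 : ‖∑ i ∈ t, c i • g i‖ ^ 2 < ε ^ 2 := lt_of_le_of_lt (lemA g hgK hB c t) h1'
  rw [Metric.mem_ball, dist_zero_right]
  exact lt_of_pow_lt_pow_left₀ 2 hε.le (by simpa using h2)

private lemma lemD {H : Type*} [NormedAddCommGroup H] [InnerProductSpace ℂ H]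
    {ι : Type*} (f : ι → H)
    (hP : ∀ g ∈ (Submodule.span ℂ (Set.range f)).topologicalClosure,
      HasSum (fun i => ‖⟪f i, g⟫_ℂ‖ ^ 2) (‖g‖ ^ 2))
    {g h : H} (hg : g ∈ (Submodule.span ℂ (Set.range f)).topologicalClosure)
    (hh : h ∈ (Submodule.span ℂ (Set.range f)).topologicalClosure) :
    HasSum (fun i => RCLike.re ((starRingEnd ℂ) ⟪f i, g⟫_ℂ * ⟪f i, h⟫_ℂ))
      (RCLike.re ⟪g, h⟫_ℂ) := by
  set K := (Submodule.span ℂ (Set.range f)).topologicalClosure with hK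
  have h1 := hP (g + h) (K.add_mem hg hh)
  have h2 := hP (g - h) (K.sub_mem hg hh)
  have h3 := ((h1.sub h2).div_const 4)
  have hval : RCLike.re ⟪g, h⟫_ℂ = (‖g + h‖ ^ 2 - ‖g - h‖ ^ 2) / 4 := by
    rw [re_inner_eq_norm_add_mul_self_sub_norm_sub_mul_self_div_four]
    ring_nf
  rw [hval]
  refine HasSum.congr_fun h3 fun i => ?_
  rw [inner_add_right, inner_sub_right, aux_sq]
  ring

/-- The Parseval Frame Identity for Parseval frame sequences: if `{f_i}` is a Parseval frame
for the closure of its span, then for every `J ⊆ I` and every `x` in the whole space `H`: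
`∑_{i∈J} |⟨x,f_i⟩|² − ‖∑_{i∈J} ⟨x,f_i⟩ f_i‖² = ∑_{i∈J^c} |⟨x,f_i⟩|² − ‖∑_{i∈J^c} ⟨x,f_i⟩ f_i‖²`. -/
theorem stmt_8 {H : Type*} [NormedAddCommGroup H] [InnerProductSpace ℂ H] [CompleteSpace H]
    {ι : Type*} (f : ι → H)
    (hP : ∀ g ∈ (Submodule.span ℂ (Set.range f)).topologicalClosure,
      HasSum (fun i => ‖⟪f i, g⟫_ℂ‖ ^ 2) (‖g‖ ^ 2))
    (J : Set ι) (x : H) :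
    (∑' i : J, ‖⟪f i, x⟫_ℂ‖ ^ 2) - ‖∑' i : J, ⟪f i, x⟫_ℂ • (f i : H)‖ ^ 2 =
    (∑' i : ↥Jᶜ, ‖⟪f i, x⟫_ℂ‖ ^ 2) - ‖∑' i : ↥Jᶜ, ⟪f i, x⟫_ℂ • (f i : H)‖ ^ 2 := by
  set K := (Submodule.span ℂ (Set.range f)).topologicalClosure with hKdef
  have hfK : ∀ i, f i ∈ K := fun i =>
    Submodule.le_topologicalClosure _ (Submodule.subset_span ⟨i, rfl⟩)
  have hKclosed : IsClosed (K : Set H) := Submodule.isClosed_topologicalClosure _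
  haveI : CompleteSpace K := hKclosed.completeSpace_coe
  set y0 : H := (K.orthogonalProjectionOnto x : H) with hy0def
  have hy0K : y0 ∈ K := (K.orthogonalProjectionOnto x).2
  have hxy0 : ∀ g ∈ K, ⟪g, x⟫_ℂ = ⟪g, y0⟫_ℂ := by
    intro g hg
    have h0 : ⟪g, x - y0⟫_ℂ = 0 :=
      Submodule.inner_right_of_mem_orthogonal hg (Submodule.sub_starProjection_mem_orthogonal (K := K) x)
    rw [inner_sub_right] at h0
    exact sub_eq_zero.mp h0
  have hcy0 : ∀ i, ⟪f i, x⟫_ℂ = ⟪f i, y0⟫_ℂ := fun i => hxy0 (f i) (hfK i)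
  have hsum2 : Summable fun i => ‖⟪f i, x⟫_ℂ‖ ^ 2 :=
    (hP y0 hy0K).summable.congr fun i => by rw [← hcy0 i]
  have hB : ∀ s : Set ι, ∀ v ∈ K, ∀ F : Finset s,
      ∑ i ∈ F, ‖⟪f i.1, v⟫_ℂ‖ ^ 2 ≤ ‖v‖ ^ 2 := by
    intro s v hv F
    have h1 := hP v hv
    have h2 : ∑ i ∈ F.map (Function.Embedding.subtype _), ‖⟪f i, v⟫_ℂ‖ ^ 2 ≤ ‖v‖ ^ 2 :=
      sum_le_hasSum _ (fun i _ => by positivity) h1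
    rwa [Finset.sum_map] at h2
  have hsumv : ∀ s : Set ι, Summable fun i : s => ⟪f i.1, x⟫_ℂ • f i.1 := fun s =>
    lemB (K := K) (fun i : s => f i) (fun i => hfK i) (hB s) _ (hsum2.subtype s)
  set a := ∑' i : J, ⟪f i, x⟫_ℂ • (f i : H) with hadef
  set b := ∑' i : ↥Jᶜ, ⟪f i, x⟫_ℂ • (f i : H) with hbdef
  have ha : HasSum (fun i : J => ⟪f i.1, x⟫_ℂ • f i.1) a := (hsumv J).hasSum
  have hb : HasSum (fun i : ↥Jᶜ => ⟪f i.1, x⟫_ℂ • f i.1) b := (hsumv Jᶜ).hasSum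
  have hmemK : ∀ (s : Set ι) (w : H),
      HasSum (fun i : s => ⟪f i.1, x⟫_ℂ • f i.1) w → w ∈ K := by
    intro s w hw
    exact hKclosed.mem_of_tendsto hw (Filter.Eventually.of_forall fun F =>
      Submodule.sum_mem _ fun i _ => K.smul_mem _ (hfK i))
  have haK := hmemK J a ha
  have hbK := hmemK Jᶜ b hb
  have hy : HasSum (fun i => ⟪f i, x⟫_ℂ • f i) (a + b) := by
    have h1 : HasSum (Set.indicator J fun i => ⟪f i, x⟫_ℂ • f i) a :=
      hasSum_subtype_iff_indicator.mp ha
    have h2 : HasSum (Set.indicator Jᶜ fun i => ⟪f i, x⟫_ℂ • f i) b :=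
      hasSum_subtype_iff_indicator.mp hb
    have h3 := h1.add h2
    exact h3.congr_fun fun i =>
      (congrFun (Set.indicator_self_add_compl J fun i => ⟪f i, x⟫_ℂ • f i) i).symm
  -- (1) for g ∈ K, re ⟪g, a+b⟫ = re ⟪g, x⟫
  have key : ∀ g, g ∈ K → RCLike.re ⟪g, a + b⟫_ℂ = RCLike.re ⟪g, x⟫_ℂ := by
    intro g hg
    have h1 : HasSum (fun i => ⟪g, ⟪f i, x⟫_ℂ • f i⟫_ℂ) ⟪g, a + b⟫_ℂ :=
      (innerSL ℂ g).hasSum hy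
    have h2 : HasSum (fun i => RCLike.re ⟪g, ⟪f i, x⟫_ℂ • f i⟫_ℂ)
        (RCLike.re ⟪g, a + b⟫_ℂ) := Complex.reCLM.hasSum h1
    have h3 := lemD f hP hg hy0K
    have h5 : HasSum (fun i => RCLike.re ((starRingEnd ℂ) ⟪f i, g⟫_ℂ * ⟪f i, y0⟫_ℂ))
        (RCLike.re ⟪g, a + b⟫_ℂ) := by
      refine HasSum.congr_fun h2 fun i => ?_
      rw [inner_smul_right, hcy0 i, ← inner_conj_symm (f i) g]
      rw [Complex.conj_conj, mul_comm]
    have h6 : RCLike.re ⟪g, a + b⟫_ℂ = RCLike.re ⟪g, y0⟫_ℂ := h5.unique h3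
    rw [h6, hxy0 g hg]
  -- (2) re ⟪x, w⟫ = subset tsum of norms
  have keyA : ∀ (s : Set ι) (w : H), HasSum (fun i : s => ⟪f i.1, x⟫_ℂ • f i.1) w →
      RCLike.re ⟪w, x⟫_ℂ = ∑' i : s, ‖⟪f i.1, x⟫_ℂ‖ ^ 2 := by
    intro s w hw
    have h1 : HasSum (fun i : s => ⟪x, ⟪f i.1, x⟫_ℂ • f i.1⟫_ℂ) ⟪x, w⟫_ℂ :=
      (innerSL ℂ x).hasSum hw
    have h2 : HasSum (fun i : s => RCLike.re ⟪x, ⟪f i.1, x⟫_ℂ • f i.1⟫_ℂ)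
        (RCLike.re ⟪x, w⟫_ℂ) := Complex.reCLM.hasSum h1
    have h3 : HasSum (fun i : s => ‖⟪f i.1, x⟫_ℂ‖ ^ 2) (RCLike.re ⟪x, w⟫_ℂ) := by
      refine HasSum.congr_fun h2 fun i => ?_
      rw [inner_smul_right, ← inner_conj_symm (f i.1) x, RCLike.norm_conj, mul_comm, aux_sq2]
    rw [inner_re_symm, h3.tsum_eq]
  have eA : (∑' i : J, ‖⟪f i, x⟫_ℂ‖ ^ 2) = RCLike.re ⟪a, x⟫_ℂ := (keyA J a ha).symm
  have eB : (∑' i : ↥Jᶜ, ‖⟪f i, x⟫_ℂ‖ ^ 2) = RCLike.re ⟪b, x⟫_ℂ := (keyA Jᶜ b hb).symm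
  have e3 : RCLike.re ⟪a, a + b⟫_ℂ = RCLike.re ⟪a, x⟫_ℂ := key a haK
  have e4 : RCLike.re ⟪b, a + b⟫_ℂ = RCLike.re ⟪b, x⟫_ℂ := key b hbK
  have e5 : RCLike.re ⟪a, a + b⟫_ℂ = ‖a‖ ^ 2 + RCLike.re ⟪a, b⟫_ℂ := by
    rw [inner_add_right, map_add, inner_self_eq_norm_sq]
  have e6 : RCLike.re ⟪b, a + b⟫_ℂ = RCLike.re ⟪b, a⟫_ℂ + ‖b‖ ^ 2 := by
    rw [inner_add_right, map_add, inner_self_eq_norm_sq]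
  have e7 : RCLike.re ⟪a, b⟫_ℂ = RCLike.re ⟪b, a⟫_ℂ := inner_re_symm a b
  rw [eA, eB]
  linarith
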